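/- In a ranked plausibility structure where Pl(⟦φ⟧) > ⊥ for all consistent φ, the derived operator K ∘ φ = {ψ : φ ↝ ψ} satisfies postulate R8: if ¬ψ ∉ K ∘ φ, then Cl(K∘φ ∪ {ψ}) ⊆ K ∘ (φ ∧ ψ). -/

import Mathlib

/-- Propositional formulas over atoms of type `α`. -/
inductive Form (α : Type) : Type
  | atom : α → Form α
  | fls : Form α
  | neg : Form α → Form α
  | conj : Form α → Form α → Form α
  | disj : Form α → Form α → Form α
  | impl : Form α → Form α → Form α

/-- Truth-value of a formula under a valuation. -/
def Form.eval {α : Type} (v : α → Bool) : Form α → Bool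
  | .atom a => v a
  | .fls => false
  | .neg φ => !(Form.eval v φ)
  | .conj φ ψ => Form.eval v φ && Form.eval v ψ
  | .disj φ ψ => Form.eval v φ || Form.eval v ψ
  | .impl φ ψ => !(Form.eval v φ) || Form.eval v ψ

/-- The set of worlds (under world-valuation `π`) satisfying `φ`. -/
def truthSet {W α : Type} (π : W → α → Bool) (φ : Form α) : Set W :=
  {w | Form.eval (π w) φ = true}

/-- Propositional validity. -/
def Taut {α : Type} (φ : Form α) : Prop := ∀ v : α → Bool, Form.eval v φ = true

/-- Propositional consequence. -/
def entails {α : Type} (Γ : Set (Form α)) (φ : Form α) : Prop :=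
  ∀ v : α → Bool, (∀ γ ∈ Γ, Form.eval v γ = true) → Form.eval v φ = true

/-- Deductive closure. -/
def Cl {α : Type} (Γ : Set (Form α)) : Set (Form α) := {φ | entails Γ φ}

/-- The conditional `φ ↝ ψ`: `Pl ⟦φ⟧ = ⊥` or `Pl ⟦φ ∧ ψ⟧ > Pl ⟦φ ∧ ¬ψ⟧`. -/
def Cond {W α D : Type} [PartialOrder D] [OrderBot D]
    (Pl : Set W → D) (π : W → α → Bool) (φ ψ : Form α) : Prop :=
  Pl (truthSet π φ) = ⊥ ∨
    Pl (truthSet π (φ.conj ψ.neg)) < Pl (truthSet π (φ.conj ψ))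

/-- Satisfaction of `φ ↝ ψ` in a preferential structure (Lewis/Boutilier style). -/
def PrefSat {W α : Type} (prec : W → W → Prop) (π : W → α → Bool)
    (φ ψ : Form α) : Prop :=
  ∀ w₁ ∈ truthSet π φ, ∃ w₂, (prec w₂ w₁ ∨ w₂ = w₁) ∧
    w₂ ∈ truthSet π (φ.conj ψ) ∧
    ∀ w₃, prec w₃ w₂ → w₃ ∈ truthSet π (φ.impl ψ)

/-- Katsuno–Mendelzon minimization: worlds in `B` closest to some world of `A`. -/
def minU {W D : Type} [PartialOrder D] (d : W → W → D) (A B : Set W) : Set W :=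
  {w | w ∈ B ∧ ∃ w₀ ∈ A, ∀ w' ∈ B, ¬ d w₀ w' < d w₀ w}

lemma Form.isClopen_truth {α : Type} (φ : Form α) :
    IsClopen {v : α → Bool | Form.eval v φ = true} := by
  induction φ with
  | atom a =>
      have h : {v : α → Bool | Form.eval v (.atom a) = true}
          = (fun v : α → Bool => v a) ⁻¹' {true} := rfl
      rw [h]; exact (isClopen_discrete _).preimage (continuous_apply a)
  | fls =>
      have h : {v : α → Bool | Form.eval v .fls = true} = (∅ : Set (α → Bool)) := by
        ext v; simp [Form.eval]
      rw [h]; exact isClopen_empty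
  | neg φ ih =>
      have h : {v : α → Bool | Form.eval v φ.neg = true}
          = {v : α → Bool | Form.eval v φ = true}ᶜ := by
        ext v; simp [Form.eval]
      rw [h]; exact ih.compl
  | conj φ ψ ih1 ih2 =>
      have h : {v : α → Bool | Form.eval v (φ.conj ψ) = true}
          = {v : α → Bool | Form.eval v φ = true} ∩ {v : α → Bool | Form.eval v ψ = true} := by
        ext v; simp [Form.eval, Bool.and_eq_true]
      rw [h]; exact ih1.inter ih2
  | disj φ ψ ih1 ih2 =>
      have h : {v : α → Bool | Form.eval v (φ.disj ψ) = true}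
          = {v : α → Bool | Form.eval v φ = true} ∪ {v : α → Bool | Form.eval v ψ = true} := by
        ext v; simp [Form.eval, Bool.or_eq_true]
      rw [h]; exact ih1.union ih2
  | impl φ ψ ih1 ih2 =>
      have h : {v : α → Bool | Form.eval v (φ.impl ψ) = true}
          = {v : α → Bool | Form.eval v φ = true}ᶜ ∪ {v : α → Bool | Form.eval v ψ = true} := by
        ext v
        simp only [Set.mem_setOf_eq, Set.mem_union, Set.mem_compl_iff, Form.eval,
          Bool.or_eq_true, Bool.not_eq_true', Bool.not_eq_true]
      rw [h]; exact ih1.compl.union ih2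

/-- Propositional compactness (for entailment), via Tychonoff. -/
lemma entails_finite {α : Type} (Γ : Set (Form α)) (χ : Form α) (h : entails Γ χ) :
    ∃ l : List (Form α), (∀ x ∈ l, x ∈ Γ) ∧ entails {x | x ∈ l} χ := by
  classical
  have hs_closed : IsClosed {v : α → Bool | Form.eval v χ = false} := by
    have h2 : {v : α → Bool | Form.eval v χ = false}
        = {v : α → Bool | Form.eval v χ = true}ᶜ := by
      ext v; simp [Bool.not_eq_true]
    rw [h2]; exact (Form.isClopen_truth χ).compl.isClosed
  have hs : IsCompact {v : α → Bool | Form.eval v χ = false} := hs_closed.isCompact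
  have key := hs.elim_finite_subfamily_closed
      (fun γ : Γ => {v : α → Bool | Form.eval v (γ : Form α) = true})
      (fun γ => (Form.isClopen_truth _).isClosed) ?empty
  case empty =>
    apply Set.eq_empty_iff_forall_notMem.mpr
    rintro v ⟨hvs, hvi⟩
    simp only [Set.mem_iInter] at hvi
    have := h v (fun γ hγ => hvi ⟨γ, hγ⟩)
    simp only [Set.mem_setOf_eq] at hvs
    rw [this] at hvs; exact Bool.noConfusion hvs
  obtain ⟨t, ht⟩ := key
  refine ⟨t.toList.map Subtype.val, ?_, ?_⟩
  · intro x hx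
    simp only [List.mem_map, Finset.mem_toList] at hx
    obtain ⟨γ, _, rfl⟩ := hx
    exact γ.2
  · intro v hv
    by_contra hfalse
    have hvs : v ∈ {v : α → Bool | Form.eval v χ = false} :=
      Bool.eq_false_iff.mpr hfalse
    have hvi : v ∈ ⋂ i ∈ t, {v : α → Bool | Form.eval v (i : Form α) = true} := by
      simp only [Set.mem_iInter]
      intro i hi
      have hmem : (i : Form α) ∈ {x | x ∈ t.toList.map Subtype.val} := by
        simp only [Set.mem_setOf_eq, List.mem_map, Finset.mem_toList]
        exact ⟨i, hi, rfl⟩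
      exact hv i.val hmem
    have : v ∈ {v : α → Bool | Form.eval v χ = false}
        ∩ ⋂ i ∈ t, {v : α → Bool | Form.eval v (i : Form α) = true} := ⟨hvs, hvi⟩
    rw [ht] at this
    exact this

/-- Key induction: plausibility of the `bad` set is strictly below that of `⟦φ∧ψ⟧`. -/
lemma bad_small {W α D : Type} [PartialOrder D] [OrderBot D]
    (Pl : Set W → D) (π : W → α → Bool)
    (hempty : Pl (∅ : Set W) = ⊥)
    (hmax : ∀ A B : Set W, Pl (A ∪ B) = Pl A ∨ Pl (A ∪ B) = Pl B)
    (φψ : Form α)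
    (hbot : ⊥ < Pl (truthSet π φψ))
    (l : List (Form α))
    (hl : ∀ x ∈ l, Pl (truthSet π (φψ.conj x.neg)) < Pl (truthSet π φψ)) :
    Pl {w | w ∈ truthSet π φψ ∧ ∃ x ∈ l, Form.eval (π w) x = false}
      < Pl (truthSet π φψ) := by
  induction l with
  | nil =>
      have h0 : {w | w ∈ truthSet π φψ ∧ ∃ x ∈ ([] : List (Form α)), Form.eval (π w) x = false}
          = (∅ : Set W) := by ext w; simp
      rw [h0, hempty]; exact hbot
  | cons x l ih =>
      have hsplit : {w | w ∈ truthSet π φψ ∧ ∃ y ∈ (x :: l), Form.eval (π w) y = false}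
          = truthSet π (φψ.conj x.neg)
            ∪ {w | w ∈ truthSet π φψ ∧ ∃ y ∈ l, Form.eval (π w) y = false} := by
        ext w
        simp only [Set.mem_setOf_eq, Set.mem_union, truthSet, List.mem_cons, Form.eval,
          Bool.and_eq_true, Bool.not_eq_true']
        constructor
        · rintro ⟨hw, y, (rfl | hy), hyf⟩
          · exact Or.inl ⟨hw, hyf⟩
          · exact Or.inr ⟨hw, y, hy, hyf⟩
        · rintro (⟨hw, hxf⟩ | ⟨hw, y, hy, hyf⟩)
          · exact ⟨hw, x, Or.inl rfl, hxf⟩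
          · exact ⟨hw, y, Or.inr hy, hyf⟩
      rw [hsplit]
      have h1 := hl x List.mem_cons_self
      have h2 := ih (fun y hy => hl y (List.mem_cons_of_mem x hy))
      rcases hmax (truthSet π (φψ.conj x.neg))
          {w | w ∈ truthSet π φψ ∧ ∃ y ∈ l, Form.eval (π w) y = false} with heq | heq
      · rw [heq]; exact h1
      · rw [heq]; exact h2

theorem stmt12 {W α D : Type} [PartialOrder D] [OrderBot D]
    (Pl : Set W → D) (π : W → α → Bool)
    (hempty : Pl (∅ : Set W) = ⊥)
    (A1 : ∀ A B : Set W, A ⊆ B → Pl A ≤ Pl B)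
    (htot : ∀ A B : Set W, Pl A ≤ Pl B ∨ Pl B ≤ Pl A)
    (hmax : ∀ A B : Set W, Pl (A ∪ B) = Pl A ∨ Pl (A ∪ B) = Pl B)
    (hpos : ∀ φ : Form α, (∃ v, Form.eval v φ = true) → ⊥ < Pl (truthSet π φ))
    (rev : Form α → Set (Form α)) (hrev : ∀ φ, rev φ = {ψ | Cond Pl π φ ψ})
    (φ ψ : Form α) (h : Form.neg ψ ∉ rev φ) :
    Cl (rev φ ∪ {ψ}) ⊆ rev (φ.conj ψ) := by
  -- Unpack the hypothesis `¬ψ ∉ K ∘ φ`.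
  rw [hrev] at h
  simp only [Set.mem_setOf_eq, Cond] at h
  push_neg at h
  obtain ⟨hne, hnlt⟩ := h
  -- `⟦φ ∧ ¬¬ψ⟧ = ⟦φ ∧ ψ⟧`
  have hdn : truthSet π (φ.conj ψ.neg.neg) = truthSet π (φ.conj ψ) := by
    ext w; simp [truthSet, Form.eval]
  rw [hdn] at hnlt
  have hle : Pl (truthSet π (φ.conj ψ.neg)) ≤ Pl (truthSet π (φ.conj ψ)) := by
    rcases htot (truthSet π (φ.conj ψ.neg)) (truthSet π (φ.conj ψ)) with h' | h'
    · exact h'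
    · rcases h'.lt_or_eq with hlt | heq'
      · exact absurd hlt hnlt
      · exact heq'.ge
  -- `⟦φ⟧ = ⟦φ∧ψ⟧ ∪ ⟦φ∧¬ψ⟧`
  have hsplitφ : truthSet π φ = truthSet π (φ.conj ψ) ∪ truthSet π (φ.conj ψ.neg) := by
    ext w
    simp only [truthSet, Set.mem_setOf_eq, Set.mem_union, Form.eval, Bool.and_eq_true,
      Bool.not_eq_true']
    cases hψ : Form.eval (π w) ψ <;> simp
  have hsub : truthSet π (φ.conj ψ) ⊆ truthSet π φ := by
    intro w hw
    simp only [truthSet, Set.mem_setOf_eq, Form.eval, Bool.and_eq_true] at hw ⊢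
    exact hw.1
  have heq : Pl (truthSet π (φ.conj ψ)) = Pl (truthSet π φ) := by
    rcases hmax (truthSet π (φ.conj ψ)) (truthSet π (φ.conj ψ.neg)) with h' | h'
    · rw [← hsplitφ] at h'; exact h'.symm
    · rw [← hsplitφ] at h'
      exact le_antisymm (A1 _ _ hsub) (h' ▸ hle)
  have hbot : ⊥ < Pl (truthSet π (φ.conj ψ)) := by
    rw [heq]; exact lt_of_le_of_ne bot_le (Ne.symm hne)
  -- main part
  intro χ hχ
  rw [hrev]
  simp only [Set.mem_setOf_eq, Cond]
  right
  have hχ' : entails (rev φ ∪ {ψ}) χ := hχ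
  obtain ⟨l, hlmem, hent⟩ := entails_finite _ _ hχ'
  -- each element of `l` gives a small set
  have hl : ∀ x ∈ l, Pl (truthSet π ((φ.conj ψ).conj x.neg)) < Pl (truthSet π (φ.conj ψ)) := by
    intro x hx
    rcases hlmem x hx with hxrev | hxψ
    · -- x ∈ rev φ
      rw [hrev] at hxrev
      simp only [Set.mem_setOf_eq, Cond] at hxrev
      rcases hxrev with hc | hc
      · exact absurd hc hne
      · have hsub2 : truthSet π ((φ.conj ψ).conj x.neg) ⊆ truthSet π (φ.conj x.neg) := by
          intro w hw
          simp only [truthSet, Set.mem_setOf_eq, Form.eval, Bool.and_eq_true] at hw ⊢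
          exact ⟨hw.1.1, hw.2⟩
        have hsub3 : truthSet π (φ.conj x) ⊆ truthSet π φ := by
          intro w hw
          simp only [truthSet, Set.mem_setOf_eq, Form.eval, Bool.and_eq_true] at hw ⊢
          exact hw.1
        calc Pl (truthSet π ((φ.conj ψ).conj x.neg))
            ≤ Pl (truthSet π (φ.conj x.neg)) := A1 _ _ hsub2
          _ < Pl (truthSet π (φ.conj x)) := hc
          _ ≤ Pl (truthSet π φ) := A1 _ _ hsub3
          _ = Pl (truthSet π (φ.conj ψ)) := heq.symm
    · -- x = ψ
      rw [Set.mem_singleton_iff] at hxψ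
      subst hxψ
      have hempty2 : truthSet π ((φ.conj x).conj x.neg) = (∅ : Set W) := by
        ext w
        simp only [truthSet, Set.mem_setOf_eq, Form.eval, Bool.and_eq_true,
          Bool.not_eq_true', Set.mem_empty_iff_false, iff_false, not_and]
        rintro ⟨_, hx⟩ hx'
        rw [hx] at hx'; exact Bool.noConfusion hx'
      rw [hempty2, hempty]
      exact hbot
  -- `⟦(φ∧ψ)∧¬χ⟧` is contained in the bad set
  have hsubbad : truthSet π ((φ.conj ψ).conj χ.neg)
      ⊆ {w | w ∈ truthSet π (φ.conj ψ) ∧ ∃ x ∈ l, Form.eval (π w) x = false} := by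
    intro w hw
    simp only [truthSet, Set.mem_setOf_eq, Form.eval, Bool.and_eq_true,
      Bool.not_eq_true'] at hw
    obtain ⟨hfψ, hχf⟩ := hw
    refine ⟨by simpa [truthSet, Form.eval, Bool.and_eq_true] using hfψ, ?_⟩
    by_contra hnone
    push_neg at hnone
    have hall : ∀ γ ∈ {x | x ∈ l}, Form.eval (π w) γ = true := by
      intro γ hγ
      cases hb : Form.eval (π w) γ
      · exact absurd hb (hnone γ hγ)
      · rfl
    have := hent (π w) hall
    rw [hχf] at this; exact Bool.noConfusion this
  have hbad := bad_small Pl π hempty hmax (φ.conj ψ) hbot l hl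
  have hltχ : Pl (truthSet π ((φ.conj ψ).conj χ.neg)) < Pl (truthSet π (φ.conj ψ)) :=
    lt_of_le_of_lt (A1 _ _ hsubbad) hbad
  -- split `⟦φ∧ψ⟧` on `χ`
  have hsplit2 : truthSet π (φ.conj ψ)
      = truthSet π ((φ.conj ψ).conj χ) ∪ truthSet π ((φ.conj ψ).conj χ.neg) := by
    ext w
    simp only [truthSet, Set.mem_setOf_eq, Set.mem_union, Form.eval, Bool.and_eq_true,
      Bool.not_eq_true']
    cases hχw : Form.eval (π w) χ <;> simp
  rcases hmax (truthSet π ((φ.conj ψ).conj χ)) (truthSet π ((φ.conj ψ).conj χ.neg)) with h' | h'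
  · rw [← hsplit2] at h'
    rw [← h']
    exact hltχ
  · rw [← hsplit2] at h'
    exact absurd h' (ne_of_gt hltχ)
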